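/- Let (E,A) be a dissipative operator pencil and suppose there is a constant c₀ > 0 such that ‖(λ₀E−A)x‖² ≥ c₀ for all x ∈ D(A) with ‖x‖ = 1, for some λ₀ > 0. Then for every λ > 0 there exists c_λ > 0 such that ‖(λE−A)x‖² = λ²‖Ex‖² − 2λ Re⟨Ex,Ax⟩ + ‖Ax‖² ≥ c_λ for all x ∈ D(A) with ‖x‖ = 1; consequently ran(λE−A) is closed for every λ > 0. -/

import Mathlib

open scoped InnerProductSpace

/-- If the pencil `(E,A)` is dissipative and for some `λ₀ > 0` there is `c₀ > 0`
with `‖(λ₀E−A)x‖² ≥ c₀` for all unit vectors `x ∈ D(A)`, then for every `λ > 0` there is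
`c_λ > 0` with `‖(λE−A)x‖² = λ²‖Ex‖² − 2λ Re⟨Ex,Ax⟩ + ‖Ax‖² ≥ c_λ` on unit vectors of `D(A)`;
consequently the range of `λE − A` is closed for every `λ > 0`. -/
theorem stmt4 {X Z : Type*}
    [NormedAddCommGroup X] [InnerProductSpace ℂ X] [CompleteSpace X]
    [NormedAddCommGroup Z] [InnerProductSpace ℂ Z] [CompleteSpace Z]
    (E : X →L[ℂ] Z) (A : X →ₗ.[ℂ] Z)
    (hdense : Dense (A.domain : Set X))
    (hclosed : IsClosed (A.graph : Set (X × Z)))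
    (hdiss : ∀ x : A.domain, (⟪A x, E (x : X)⟫_ℂ).re ≤ 0)
    (l₀ : ℝ) (hl₀ : 0 < l₀) (c₀ : ℝ) (hc₀ : 0 < c₀)
    (hbound : ∀ x : A.domain, ‖(x : X)‖ = 1 → c₀ ≤ ‖(l₀ : ℂ) • E (x : X) - A x‖ ^ 2) :
    ∀ l : ℝ, 0 < l →
      (∃ c : ℝ, 0 < c ∧ ∀ x : A.domain, ‖(x : X)‖ = 1 →
        (‖(l : ℂ) • E (x : X) - A x‖ ^ 2
            = l ^ 2 * ‖E (x : X)‖ ^ 2 - 2 * l * (⟪E (x : X), A x⟫_ℂ).re + ‖A x‖ ^ 2) ∧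
        c ≤ ‖(l : ℂ) • E (x : X) - A x‖ ^ 2) ∧
      IsClosed {z : Z | ∃ x : A.domain, (l : ℂ) • E (x : X) - A x = z} := by
  intro l hl
  -- expansion
  have expand : ∀ (m : ℝ) (x : A.domain),
      ‖(m : ℂ) • E (x : X) - A x‖ ^ 2
        = m ^ 2 * ‖E (x : X)‖ ^ 2 - 2 * m * (⟪E (x : X), A x⟫_ℂ).re + ‖A x‖ ^ 2 := by
    intro m x
    have h := @norm_sub_sq ℂ Z _ _ _ ((m : ℂ) • E (x : X)) (A x)
    rw [h]
    have h1 : ‖(m : ℂ) • E (x : X)‖ = |m| * ‖E (x : X)‖ := by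
      rw [norm_smul, Complex.norm_real, Real.norm_eq_abs]
    have h2 : ⟪(m : ℂ) • E (x : X), A x⟫_ℂ = (m : ℂ) * ⟪E (x : X), A x⟫_ℂ := by
      rw [inner_smul_left]; simp
    rw [h1, h2]
    have : RCLike.re ((m : ℂ) * ⟪E (x : X), A x⟫_ℂ) = m * (⟪E (x : X), A x⟫_ℂ).re := by
      simp [Complex.re_ofReal_mul]
    rw [this]
    have habs : (|m| * ‖E (x : X)‖) ^ 2 = m ^ 2 * ‖E (x : X)‖ ^ 2 := by
      rw [mul_pow, sq_abs]
    rw [habs]; ring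
  -- dissipativity in the convenient form
  have hdiss' : ∀ x : A.domain, (⟪E (x : X), A x⟫_ℂ).re ≤ 0 := by
    intro x
    have := hdiss x
    rwa [← inner_conj_symm, Complex.conj_re] at this
  -- the constant
  set c : ℝ := min (l ^ 2 / l₀ ^ 2) 1 * c₀ with hc_def
  have hcpos : 0 < c := by
    apply mul_pos _ hc₀
    exact lt_min (by positivity) one_pos
  -- the unit-sphere bound
  have hunit : ∀ x : A.domain, ‖(x : X)‖ = 1 → c ≤ ‖(l : ℂ) • E (x : X) - A x‖ ^ 2 := by
    intro x hx
    have h0 := hbound x hx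
    rw [expand l₀ x] at h0
    rw [expand l x]
    set a := ‖E (x : X)‖ ^ 2 with ha
    set b := ‖A x‖ ^ 2 with hb
    set R := (⟪E (x : X), A x⟫_ℂ).re with hR
    have hRle : R ≤ 0 := hdiss' x
    have ha0 : 0 ≤ a := by positivity
    have hb0 : 0 ≤ b := by positivity
    rcases le_or_gt l₀ l with hll | hll
    · have hmin : min (l ^ 2 / l₀ ^ 2) 1 = 1 := by
        rw [min_eq_right]
        rw [le_div_iff₀ (by positivity)]
        nlinarith
      rw [hc_def, hmin, one_mul]
      nlinarith [mul_nonneg (mul_nonneg (sub_nonneg.2 hll) (by linarith : (0:ℝ) ≤ l + l₀)) ha0,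
        mul_nonneg (sub_nonneg.2 hll) (neg_nonneg.2 hRle)]
    · have hmin : min (l ^ 2 / l₀ ^ 2) 1 = l ^ 2 / l₀ ^ 2 := by
        rw [min_eq_left]
        rw [div_le_one (by positivity)]
        nlinarith
      rw [hc_def, hmin]
      rw [div_mul_eq_mul_div, div_le_iff₀ (by positivity)]
      nlinarith [mul_le_mul_of_nonneg_left h0 (sq_nonneg l),
        mul_nonneg (mul_nonneg (mul_nonneg hl.le hl₀.le) (sub_nonneg.2 hll.le))
          (neg_nonneg.2 hRle),
        mul_nonneg hb0 (mul_nonneg (sub_nonneg.2 hll.le) (by linarith : (0:ℝ) ≤ l + l₀))]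
  refine ⟨⟨c, hcpos, fun x hx => ⟨expand l x, hunit x hx⟩⟩, ?_⟩
  -- scaling bound for all vectors
  have hscale : ∀ x : A.domain, c * ‖(x : X)‖ ^ 2 ≤ ‖(l : ℂ) • E (x : X) - A x‖ ^ 2 := by
    intro x
    by_cases hx0 : (x : X) = 0
    · have : x = 0 := Subtype.ext hx0
      subst this
      simp
    · set t : ℝ := ‖(x : X)‖ with ht
      have ht0 : 0 < t := norm_pos_iff.2 hx0
      set y : A.domain := (((t : ℂ))⁻¹) • x with hy
      have hyc : (y : X) = ((t : ℂ))⁻¹ • (x : X) := rfl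
      have hnt : ‖((t : ℂ))⁻¹‖ = t⁻¹ := by
        rw [norm_inv, Complex.norm_real, Real.norm_eq_abs, abs_of_pos ht0]
      have hyn : ‖(y : X)‖ = 1 := by
        rw [hyc, norm_smul, hnt]
        field_simp
        exact ht.symm
      have hAy : A y = ((t : ℂ))⁻¹ • A x := A.map_smul _ x
      have key := hunit y hyn
      have hval : (l : ℂ) • E (y : X) - A y
          = ((t : ℂ))⁻¹ • ((l : ℂ) • E (x : X) - A x) := by
        rw [hyc, hAy, map_smul, smul_sub, smul_comm]
      rw [hval, norm_smul, mul_pow, hnt] at key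
      have h2 := mul_le_mul_of_nonneg_right key (sq_nonneg t)
      have h3 : (t⁻¹) ^ 2 * ‖(l : ℂ) • E (x : X) - A x‖ ^ 2 * t ^ 2
          = ‖(l : ℂ) • E (x : X) - A x‖ ^ 2 := by
        field_simp
      rw [h3] at h2
      exact h2
  -- closedness of the range
  apply IsSeqClosed.isClosed
  intro u z hu hz
  choose x hx using hu
  -- the sequence x is Cauchy in X
  have hcauchy : CauchySeq (fun n => ((x n : X))) := by
    rw [Metric.cauchySeq_iff]
    intro ε hε
    have huc : CauchySeq u := hz.cauchySeq
    rw [Metric.cauchySeq_iff] at huc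
    obtain ⟨N, hN⟩ := huc (Real.sqrt c * ε) (by positivity)
    refine ⟨N, fun m hm n hn => ?_⟩
    have hd := hN m hm n hn
    have hsub : (l : ℂ) • E ((x m - x n : A.domain) : X) - A (x m - x n)
        = u m - u n := by
      rw [A.map_sub]
      push_cast
      rw [map_sub, smul_sub, ← hx m, ← hx n]
      abel
    have hb := hscale (x m - x n)
    rw [hsub] at hb
    have hcoe : ((x m - x n : A.domain) : X) = (x m : X) - (x n : X) := rfl
    rw [hcoe] at hb
    rw [dist_eq_norm] at hd ⊢
    have hsq : Real.sqrt c ^ 2 = c := Real.sq_sqrt hcpos.le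
    have hsc : 0 < Real.sqrt c := Real.sqrt_pos.2 hcpos
    have h1 : ‖u m - u n‖ ^ 2 < c * ε ^ 2 := by
      nlinarith [norm_nonneg (u m - u n),
        mul_self_lt_mul_self (norm_nonneg (u m - u n)) hd]
    have h2 : ‖(x m : X) - (x n : X)‖ ^ 2 < ε ^ 2 := by
      nlinarith
    have := lt_of_pow_lt_pow_left₀ 2 hε.le
      (by simpa [abs_of_nonneg (norm_nonneg _)] using h2)
    simpa using this
  obtain ⟨xl, hxl⟩ := cauchySeq_tendsto_of_complete hcauchy
  -- A (x n) converges
  have hA : Filter.Tendsto (fun n => A (x n)) Filter.atTop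
      (nhds ((l : ℂ) • E xl - z)) := by
    have heq : (fun n => A (x n)) = fun n => (l : ℂ) • E ((x n : X)) - u n := by
      funext n
      have := hx n
      rw [← this]
      abel
    rw [heq]
    exact (((E.continuous.tendsto xl).comp hxl).const_smul _).sub hz
  -- use closedness of the graph
  have hmem : (xl, (l : ℂ) • E xl - z) ∈ A.graph :=
    hclosed.isSeqClosed (fun n => A.mem_graph (x n)) (hxl.prodMk_nhds hA)
  rw [A.mem_graph_iff] at hmem
  obtain ⟨y, hy1, hy2⟩ := hmem
  refine ⟨y, ?_⟩
  simp only at hy1 hy2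
  rw [hy2, hy1]
  abel
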